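/- Let F = {w ∈ ℂⁿ : |ã_i^*(x₀ + w)| ≤ b_i, 1 ≤ i ≤ m} where ã_i^* x₀ = b_i > 0 for all i. Then cone(F) = ⋂_{i=1}^m {w ∈ ℂⁿ : Re(ã_i^* w) ≤ 0}. -/

import Mathlib

/-- Lemma 3: the closed conical hull of the PhaseMax feasible set
`F = {w : |ãᵢ*(x₀+w)| ≤ bᵢ ∀ i}` (with `ãᵢ* x₀ = bᵢ > 0`) equals the intersection
of the half-spaces `{w : Re(ãᵢ* w) ≤ 0}`. -/
theorem stmt5 {n m : ℕ} (x₀ : EuclideanSpace ℂ (Fin n))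
    (ta : Fin m → EuclideanSpace ℂ (Fin n)) (b : Fin m → ℝ)
    (hb : ∀ i, 0 < b i)
    (halign : ∀ i, (inner ℂ (ta i) x₀ : ℂ) = (b i : ℂ))
    (F : Set (EuclideanSpace ℂ (Fin n)))
    (hF : F = {w | ∀ i, ‖(inner ℂ (ta i) (x₀ + w) : ℂ)‖ ≤ b i}) :
    closure {x | ∃ r : ℝ, 0 ≤ r ∧ ∃ w ∈ F, x = r • w}
      = ⋂ i, {w : EuclideanSpace ℂ (Fin n) | ((inner ℂ (ta i) w : ℂ)).re ≤ 0} := by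
  subst hF
  have key : ∀ i (w : EuclideanSpace ℂ (Fin n)),
      (inner ℂ (ta i) (x₀ + w) : ℂ) = (b i : ℂ) + inner ℂ (ta i) w := by
    intro i w; rw [inner_add_right, halign]
  apply Set.Subset.antisymm
  · apply closure_minimal
    · rintro x ⟨r, hr, w, hw, rfl⟩
      rw [Set.mem_iInter]
      intro i
      have hwi := hw i
      rw [key] at hwi
      have h1 : ((b i : ℂ) + inner ℂ (ta i) w).re ≤ ‖(b i : ℂ) + inner ℂ (ta i) w‖ :=
        Complex.re_le_norm _
      have h2 : ((inner ℂ (ta i) w : ℂ)).re ≤ 0 := by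
        simp only [Complex.add_re, Complex.ofReal_re] at h1
        linarith
      have h3 : (inner ℂ (ta i) (r • w) : ℂ) = (r : ℂ) • (inner ℂ (ta i) w : ℂ) :=
        inner_smul_real_right _ _ _
      simp only [Set.mem_setOf_eq, h3, Complex.smul_re, smul_eq_mul, Complex.mul_re,
        Complex.ofReal_re, Complex.ofReal_im, zero_mul, sub_zero]
      nlinarith
    · exact isClosed_iInter fun i =>
        isClosed_le (Complex.continuous_re.comp (innerSL ℂ (ta i)).continuous) continuous_const
  · intro w hw
    rw [Set.mem_iInter] at hw
    rw [Metric.mem_closure_iff]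
    intro δ hδ
    set ε : ℝ := δ / (2 * (‖x₀‖ + 1)) with hε
    have hx0 : (0:ℝ) < ‖x₀‖ + 1 := by positivity
    have hε0 : 0 < ε := by positivity
    set wε : EuclideanSpace ℂ (Fin n) := w - ε • x₀ with hwε
    set z : Fin m → ℂ := fun i => inner ℂ (ta i) wε with hz
    have hzre : ∀ i, (z i).re ≤ -(ε * b i) := by
      intro i
      have hsr : (inner ℂ (ta i) ((ε:ℝ) • x₀) : ℂ) = (ε:ℝ) • (inner ℂ (ta i) x₀ : ℂ) :=
        inner_smul_real_right _ _ _
      have hthis : z i = (inner ℂ (ta i) w : ℂ) - (ε : ℂ) * (b i : ℂ) := by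
        simp only [hz, hwε, inner_sub_right, hsr, halign, Complex.real_smul]
      rw [hthis]
      have := hw i
      simp only [Set.mem_setOf_eq] at this
      simp only [Complex.sub_re, Complex.mul_re, Complex.ofReal_re, Complex.ofReal_im,
        zero_mul, sub_zero]
      linarith
    -- choose t > 0 with t * (normSq (z i) + 1) ≤ 2 * ε * (b i)^2 for all i
    obtain ⟨t, ht0, htc⟩ : ∃ t : ℝ, 0 < t ∧
        ∀ i, t * (Complex.normSq (z i) + 1) ≤ 2 * ε * (b i)^2 := by
      rcases isEmpty_or_nonempty (Fin m) with hm | hm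
      · exact ⟨1, one_pos, fun i => (hm.false i).elim⟩
      · set c : Fin m → ℝ := fun i => 2 * ε * (b i)^2 / (Complex.normSq (z i) + 1) with hc
        have hcpos : ∀ i, 0 < c i := by
          intro i
          have h1 : 0 < 2 * ε * (b i)^2 :=
            mul_pos (mul_pos two_pos hε0) (pow_pos (hb i) 2)
          have h2 : 0 < Complex.normSq (z i) + 1 :=
            add_pos_of_nonneg_of_pos (Complex.normSq_nonneg _) one_pos
          exact div_pos h1 h2
        refine ⟨Finset.univ.inf' Finset.univ_nonempty c, ?_, ?_⟩
        · exact (Finset.lt_inf'_iff _).mpr fun i _ => hcpos i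
        · intro i
          have h2 : 0 < Complex.normSq (z i) + 1 :=
            add_pos_of_nonneg_of_pos (Complex.normSq_nonneg _) one_pos
          have hle : Finset.univ.inf' Finset.univ_nonempty c ≤ c i :=
            Finset.inf'_le _ (Finset.mem_univ i)
          calc Finset.univ.inf' Finset.univ_nonempty c * (Complex.normSq (z i) + 1)
              ≤ c i * (Complex.normSq (z i) + 1) := by
                exact mul_le_mul_of_nonneg_right hle h2.le
            _ = 2 * ε * (b i)^2 := by rw [hc]; field_simp
    refine ⟨wε, ⟨1/t, le_of_lt (one_div_pos.mpr ht0), t • wε, ?_, ?_⟩, ?_⟩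
    · -- t • wε ∈ F
      intro i
      have h4 : (inner ℂ (ta i) ((t:ℝ) • wε) : ℂ) = (t:ℝ) • (inner ℂ (ta i) wε : ℂ) :=
        inner_smul_real_right _ _ _
      have hζ : (inner ℂ (ta i) (x₀ + t • wε) : ℂ) = (b i : ℂ) + (t : ℂ) * z i := by
        rw [key, h4, Complex.real_smul]
      rw [hζ]
      set ζ : ℂ := (b i : ℂ) + (t : ℂ) * z i with hζdef
      have hsq : ‖ζ‖^2 = Complex.normSq ζ := Complex.sq_norm ζ
      have hnormsq : Complex.normSq ζ =
          (b i + t * (z i).re)^2 + (t * (z i).im)^2 := by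
        rw [hζdef, Complex.normSq_apply]
        simp only [Complex.add_re, Complex.add_im, Complex.ofReal_re, Complex.ofReal_im,
          Complex.mul_re, Complex.mul_im, zero_mul, sub_zero, zero_add]
        ring
      have hzsq : Complex.normSq (z i) = (z i).re^2 + (z i).im^2 := by
        rw [Complex.normSq_apply]; ring
      have h1 := htc i
      have h2 := hzre i
      have h3 := (hb i)
      have habs : 0 ≤ ‖ζ‖ := norm_nonneg ζ
      rw [hzsq] at h1
      have h1' : t * (t * ((z i).re^2 + (z i).im^2 + 1)) ≤ t * (2 * ε * (b i)^2) :=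
        mul_le_mul_of_nonneg_left h1 ht0.le
      have h2' : (2 * t * b i) * (z i).re ≤ (2 * t * b i) * (-(ε * b i)) :=
        mul_le_mul_of_nonneg_left h2 (by positivity)
      have hA2 : ‖ζ‖^2 ≤ (b i)^2 := by
        rw [hsq, hnormsq]; nlinarith [sq_nonneg t]
      nlinarith [hA2, habs, h3]
    · rw [smul_smul, one_div_mul_cancel ht0.ne', one_smul]
    · rw [hwε, dist_eq_norm, sub_sub_cancel, norm_smul]
      simp only [Real.norm_eq_abs, abs_of_pos hε0]
      have : ε * ‖x₀‖ < ε * (‖x₀‖ + 1) := by nlinarith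
      have h2 : ε * (‖x₀‖ + 1) = δ / 2 := by rw [hε]; field_simp
      linarith
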